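/- Let 1 < p ≤ 2 and let H : ℝ^n → [0,∞) be a norm of class C^2 on ℝ^n \ {0} such that the Hessian of H^p satisfies |∇²_ξ H^p(ξ)| ≤ C_{p,H} H(ξ)^{p−2} for all ξ ≠ 0. Define a(ξ) = (1/p)∇_ξ H^p(ξ) for ξ ≠ 0 and a(0) = 0. Then there exists a finite constant c such that |a(ξ+η) − a(ξ)| ≤ c · H(η)^{p−1} for all ξ ∈ ℝ^n and all η ∈ ℝ^n \ {0}. -/

import Mathlib

lemma rpow_sub_rpow_le_aux {p : ℝ} (hp : 1 ≤ p) {a b : ℝ} (ha : 0 ≤ a) (hab : a ≤ b) :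
    b ^ p - a ^ p ≤ p * b ^ (p - 1) * (b - a) := by
  rcases (ha.trans hab).eq_or_lt with hb | hb
  · have ha0 : a = 0 := le_antisymm (hab.trans hb.ge) ha
    simp [ha0, ← hb]
  · have hs : -1 ≤ a / b - 1 := by
      have : 0 ≤ a / b := div_nonneg ha hb.le
      linarith
    have hber := one_add_mul_self_le_rpow_one_add hs hp
    have h1 : (1 : ℝ) + (a / b - 1) = a / b := by ring
    rw [h1] at hber
    have hbp : 0 < b ^ p := Real.rpow_pos_of_pos hb p
    have key : (1 + p * (a / b - 1)) * b ^ p ≤ a ^ p := by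
      calc (1 + p * (a / b - 1)) * b ^ p ≤ (a / b) ^ p * b ^ p :=
            mul_le_mul_of_nonneg_right hber hbp.le
        _ = a ^ p := by
            rw [← Real.mul_rpow (div_nonneg ha hb.le) hb.le, div_mul_cancel₀ a hb.ne']
    have hb1 : b ^ (p - 1) * b = b ^ p := by
      rw [← Real.rpow_add_one hb.ne' (p - 1)]
      norm_num
    have h2 : p * b ^ (p - 1) * (b - a) = -(p * (a / b - 1)) * b ^ p := by
      rw [← hb1]
      field_simp
      ring
    rw [h2]
    linarith [key]

open scoped Classical in
noncomputable def stress {n : ℕ} (p : ℝ) (H : EuclideanSpace ℝ (Fin n) → ℝ) :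
    EuclideanSpace ℝ (Fin n) → EuclideanSpace ℝ (Fin n) :=
  fun ξ => if ξ = 0 then 0 else (1 / p) • gradient (fun η => H η ^ p) ξ

set_option maxHeartbeats 2000000 in
theorem stmt11 (n : ℕ) (p : ℝ) (hp1 : 1 < p) (hp2 : p ≤ 2)
    (H : EuclideanSpace ℝ (Fin n) → ℝ)
    (Hadd : ∀ x y, H (x + y) ≤ H x + H y)
    (Hsmul : ∀ (c : ℝ) x, H (c • x) = |c| * H x)
    (Hpos : ∀ x, x ≠ 0 → 0 < H x)
    (cH CH : ℝ) (hcH : 0 < cH)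
    (hequiv : ∀ ξ, cH * ‖ξ‖ ≤ H ξ ∧ H ξ ≤ CH * ‖ξ‖)
    (Hsmooth : ContDiffOn ℝ 2 H ({0}ᶜ : Set (EuclideanSpace ℝ (Fin n))))
    (CpH : ℝ)
    (hHess : ∀ ξ : EuclideanSpace ℝ (Fin n), ξ ≠ 0 →
      ‖iteratedFDeriv ℝ 2 (fun η => H η ^ p) ξ‖ ≤ CpH * H ξ ^ (p - 2)) :
    ∃ c : ℝ, ∀ (ξ η : EuclideanSpace ℝ (Fin n)), η ≠ 0 →
      ‖stress p H (ξ + η) - stress p H ξ‖ ≤ c * H η ^ (p - 1) := by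
  rcases Nat.eq_zero_or_pos n with h0 | hn
  · subst h0
    exact ⟨0, fun ξ η hη => absurd (Subsingleton.elim η 0) hη⟩
  have hp0 : (0:ℝ) < p := by linarith
  have Hnonneg : ∀ x : EuclideanSpace ℝ (Fin n), 0 ≤ H x := by
    intro x
    exact le_trans (by positivity) (hequiv x).1
  have H0 : H 0 = 0 := le_antisymm (by simpa using (hequiv 0).2) (Hnonneg 0)
  -- a nonzero vector, to get sign information on the constants
  set v0 : EuclideanSpace ℝ (Fin n) := EuclideanSpace.single ⟨0, hn⟩ (1:ℝ) with hv0def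
  have hv0n : ‖v0‖ = 1 := by rw [hv0def, EuclideanSpace.norm_single]; norm_num
  have hv0 : v0 ≠ 0 := by
    intro h
    rw [h, norm_zero] at hv0n
    norm_num at hv0n
  have hCH : 0 < CH := by
    have h1 := (hequiv v0).1
    have h2 := (hequiv v0).2
    rw [hv0n] at h1 h2
    nlinarith
  have hCpH : 0 ≤ CpH := by
    have h1 := hHess v0 hv0
    have h2 : 0 < H v0 ^ (p - 2) := Real.rpow_pos_of_pos (Hpos v0 hv0) _
    nlinarith [norm_nonneg (iteratedFDeriv ℝ 2 (fun η => H η ^ p) v0)]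
  -- smoothness of f = H ^ p away from the origin
  have hfC2 : ∀ x : EuclideanSpace ℝ (Fin n), x ≠ 0 →
      ContDiffAt ℝ 2 (fun η => H η ^ p) x := by
    intro x hx
    have hxU : x ∈ ({0}ᶜ : Set (EuclideanSpace ℝ (Fin n))) := hx
    exact (Hsmooth.contDiffAt (isOpen_compl_singleton.mem_nhds hxU)).rpow_const_of_ne
      (ne_of_gt (Hpos x hx))
  have hdiff : ∀ x : EuclideanSpace ℝ (Fin n), x ≠ 0 →
      DifferentiableAt ℝ (fun η => H η ^ p) x := by
    intro x hx
    exact (hfC2 x hx).differentiableAt (by norm_num)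
  have hgdiff : ∀ x : EuclideanSpace ℝ (Fin n), x ≠ 0 →
      DifferentiableAt ℝ (fun y => fderiv ℝ (fun η => H η ^ p) y) x := by
    intro x hx
    exact ((hfC2 x hx).fderiv_right (m := 1) (by norm_num)).differentiableAt one_ne_zero
  -- the second derivative bound, as a bound on the derivative of the derivative
  have hgd2 : ∀ x : EuclideanSpace ℝ (Fin n), x ≠ 0 →
      ‖fderiv ℝ (fun y => fderiv ℝ (fun η => H η ^ p) y) x‖ ≤ CpH * H x ^ (p - 2) := by
    intro x hx
    refine le_trans ?_ (hHess x hx)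
    refine ContinuousLinearMap.opNorm_le_bound _ (norm_nonneg _) fun v => ?_
    refine ContinuousLinearMap.opNorm_le_bound _ (by positivity) fun w => ?_
    have h1 := ContinuousMultilinearMap.le_opNorm (iteratedFDeriv ℝ 2 (fun η => H η ^ p) x) ![v, w]
    rw [iteratedFDeriv_two_apply] at h1
    simp only [Matrix.cons_val_zero, Matrix.cons_val_one, Matrix.head_cons,
      Fin.prod_univ_two] at h1
    calc ‖fderiv ℝ (fun y => fderiv ℝ (fun η => H η ^ p) y) x v w‖
        ≤ ‖iteratedFDeriv ℝ 2 (fun η => H η ^ p) x‖ * (‖v‖ * ‖w‖) := h1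
      _ = ‖iteratedFDeriv ℝ 2 (fun η => H η ^ p) x‖ * ‖v‖ * ‖w‖ := by ring
  -- the gradient (first derivative) bound
  have hgradb : ∀ x : EuclideanSpace ℝ (Fin n), x ≠ 0 →
      ‖fderiv ℝ (fun η => H η ^ p) x‖ ≤ p * CH * H x ^ (p - 1) := by
    intro x hx
    have hHx := Hpos x hx
    have hrn : 0 ≤ H x ^ (p - 1) := Real.rpow_nonneg (Hnonneg x) _
    refine ContinuousLinearMap.opNorm_le_bound _
      (mul_nonneg (mul_nonneg hp0.le hCH.le) hrn) fun v => ?_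
    have key : ‖fderiv ℝ (fun η => H η ^ p) x v‖ ≤ p * H x ^ (p - 1) * H v := by
      set φ : ℝ → ℝ := fun t => H (x + t • v) ^ p with hφdef
      have hφ : HasDerivAt φ (fderiv ℝ (fun η => H η ^ p) x v) 0 := by
        have h1 : HasDerivAt (fun t : ℝ => x + t • v) v 0 := by
          simpa using ((hasDerivAt_id (0:ℝ)).smul_const v).const_add x
        have h2 : HasFDerivAt (fun η => H η ^ p) (fderiv ℝ (fun η => H η ^ p) x)
            ((fun t : ℝ => x + t • v) 0) := by
          simpa using (hdiff x hx).hasFDerivAt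
        exact h2.comp_hasDerivAt 0 h1
      have hsl := hasDerivAt_iff_tendsto_slope.mp hφ
      have hT1 : Filter.Tendsto (fun t => |slope φ 0 t|) (nhdsWithin 0 {(0:ℝ)}ᶜ)
          (nhds |fderiv ℝ (fun η => H η ^ p) x v|) := hsl.abs
      have hT2 : Filter.Tendsto (fun t : ℝ => p * (H x + |t| * H v) ^ (p - 1) * H v)
          (nhdsWithin 0 {(0:ℝ)}ᶜ) (nhds (p * H x ^ (p - 1) * H v)) := by
        have h1 : ContinuousAt (fun t : ℝ => H x + |t| * H v) 0 := by fun_prop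
        have hne : (fun t : ℝ => H x + |t| * H v) 0 ≠ 0 := by
          simpa using hHx.ne'
        have hc : ContinuousAt (fun t : ℝ => p * (H x + |t| * H v) ^ (p - 1) * H v) 0 :=
          (continuousAt_const.mul (h1.rpow_const (Or.inl hne))).mul continuousAt_const
        have h := hc.tendsto
        simp only [abs_zero, zero_mul, add_zero] at h
        exact h.mono_left nhdsWithin_le_nhds
      have hev : ∀ᶠ t in nhdsWithin 0 {(0:ℝ)}ᶜ,
          |slope φ 0 t| ≤ p * (H x + |t| * H v) ^ (p - 1) * H v := by
        filter_upwards [self_mem_nhdsWithin] with t ht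
        have ht0 : t ≠ 0 := ht
        have hHtv : H (t • v) = |t| * H v := Hsmul t v
        have ha' : H (x + t • v) ≤ H x + |t| * H v := by
          have := Hadd x (t • v); rw [hHtv] at this; exact this
        have hb' : H x ≤ H (x + t • v) + |t| * H v := by
          have h3 : H (-(t • v)) = |t| * H v := by
            rw [← neg_smul, Hsmul, abs_neg]
          have := Hadd (x + t • v) (-(t • v))
          rw [add_neg_cancel_right, h3] at this
          exact this
        have htv : (0:ℝ) ≤ |t| * H v := mul_nonneg (abs_nonneg t) (Hnonneg v)
        have hbase : (0:ℝ) ≤ H x + |t| * H v := add_nonneg (Hnonneg x) htv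
        have hr : 0 ≤ (H x + |t| * H v) ^ (p - 1) := Real.rpow_nonneg hbase _
        have habs : |H (x + t • v) ^ p - H x ^ p| ≤
            p * (H x + |t| * H v) ^ (p - 1) * (|t| * H v) := by
          rcases le_total (H (x + t • v)) (H x) with hab | hab
          · rw [abs_of_nonpos (sub_nonpos.mpr (Real.rpow_le_rpow (Hnonneg _) hab hp0.le)),
              neg_sub]
            calc H x ^ p - H (x + t • v) ^ p
                ≤ p * H x ^ (p - 1) * (H x - H (x + t • v)) :=
                  rpow_sub_rpow_le_aux hp1.le (Hnonneg _) hab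
              _ ≤ p * (H x + |t| * H v) ^ (p - 1) * (|t| * H v) := by
                  have hmono : H x ^ (p - 1) ≤ (H x + |t| * H v) ^ (p - 1) :=
                    Real.rpow_le_rpow (Hnonneg x) (by linarith) (by linarith)
                  have hkey := mul_le_mul hmono (by linarith : H x - H (x + t • v) ≤ |t| * H v)
                    (by linarith) hr
                  nlinarith [hkey]
          · rw [abs_of_nonneg (sub_nonneg.mpr (Real.rpow_le_rpow (Hnonneg _) hab hp0.le))]
            calc H (x + t • v) ^ p - H x ^ p
                ≤ p * H (x + t • v) ^ (p - 1) * (H (x + t • v) - H x) :=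
                  rpow_sub_rpow_le_aux hp1.le (Hnonneg _) hab
              _ ≤ p * (H x + |t| * H v) ^ (p - 1) * (|t| * H v) := by
                  have hmono : H (x + t • v) ^ (p - 1) ≤ (H x + |t| * H v) ^ (p - 1) :=
                    Real.rpow_le_rpow (Hnonneg _) (by linarith) (by linarith)
                  have hkey := mul_le_mul hmono (by linarith : H (x + t • v) - H x ≤ |t| * H v)
                    (by linarith) hr
                  nlinarith [hkey]
        have hslope : |slope φ 0 t| = |φ t - φ 0| / |t| := by
          rw [slope_def_field]
          rw [abs_div]
          norm_num
        rw [hslope, div_le_iff₀ (abs_pos.mpr ht0)]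
        have hφt : φ t - φ 0 = H (x + t • v) ^ p - H x ^ p := by
          simp [hφdef]
        rw [hφt]
        calc |H (x + t • v) ^ p - H x ^ p|
            ≤ p * (H x + |t| * H v) ^ (p - 1) * (|t| * H v) := habs
          _ = p * (H x + |t| * H v) ^ (p - 1) * H v * |t| := by ring
      have := le_of_tendsto_of_tendsto hT1 hT2 hev
      simpa [Real.norm_eq_abs] using this
    have hv2 := (hequiv v).2
    have hr : 0 ≤ H x ^ (p - 1) := Real.rpow_nonneg (Hnonneg x) _
    calc ‖fderiv ℝ (fun η => H η ^ p) x v‖ ≤ p * H x ^ (p - 1) * H v := key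
      _ ≤ p * CH * H x ^ (p - 1) * ‖v‖ := by
          nlinarith [mul_le_mul_of_nonneg_left hv2 (mul_nonneg hp0.le hr)]
  -- norms of gradients equal norms of derivatives
  have hgnorm : ∀ y : EuclideanSpace ℝ (Fin n),
      ‖gradient (fun η => H η ^ p) y‖ = ‖fderiv ℝ (fun η => H η ^ p) y‖ := by
    intro y
    unfold gradient
    exact (InnerProductSpace.toDual ℝ _).symm.norm_map _
  -- pointwise bound on the stress
  have hstressb : ∀ x : EuclideanSpace ℝ (Fin n), ‖stress p H x‖ ≤ CH * H x ^ (p - 1) := by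
    intro x
    by_cases hx : x = 0
    · subst hx
      simp only [stress, if_pos rfl, norm_zero, H0]
      rw [Real.zero_rpow (by linarith : (0:ℝ) < p - 1).ne']
      simp
    · simp only [stress, if_neg hx]
      rw [norm_smul, Real.norm_eq_abs, abs_of_pos (by positivity : (0:ℝ) < 1 / p), hgnorm]
      calc 1 / p * ‖fderiv ℝ (fun η => H η ^ p) x‖
          ≤ 1 / p * (p * CH * H x ^ (p - 1)) := by
            have := hgradb x hx
            gcongr
        _ = CH * H x ^ (p - 1) := by field_simp
  refine ⟨5 * CH + CpH / cH, fun ξ η hη => ?_⟩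
  have hηpos : 0 < H η := Hpos η hη
  have hrη : 0 ≤ H η ^ (p - 1) := Real.rpow_nonneg (Hnonneg η) _
  have hdiv : 0 ≤ CpH / cH := div_nonneg hCpH hcH.le
  rcases le_or_gt (H ξ) (2 * H η) with hcase | hcase
  · -- here H ξ is small compared to H η; use the pointwise bound
    have hA : H (ξ + η) ≤ 3 * H η := le_trans (Hadd ξ η) (by linarith)
    have hmul3 : ((3:ℝ) * H η) ^ (p - 1) = 3 ^ (p - 1) * H η ^ (p - 1) :=
      Real.mul_rpow (by norm_num) (Hnonneg η)
    have hmul2 : ((2:ℝ) * H η) ^ (p - 1) = 2 ^ (p - 1) * H η ^ (p - 1) :=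
      Real.mul_rpow (by norm_num) (Hnonneg η)
    have h3p : (3:ℝ) ^ (p - 1) ≤ 3 := by
      calc (3:ℝ) ^ (p - 1) ≤ 3 ^ (1:ℝ) :=
            Real.rpow_le_rpow_of_exponent_le (by norm_num) (by linarith)
        _ = 3 := Real.rpow_one 3
    have h2p : (2:ℝ) ^ (p - 1) ≤ 2 := by
      calc (2:ℝ) ^ (p - 1) ≤ 2 ^ (1:ℝ) :=
            Real.rpow_le_rpow_of_exponent_le (by norm_num) (by linarith)
        _ = 2 := Real.rpow_one 2
    have hb1 : H (ξ + η) ^ (p - 1) ≤ 3 * H η ^ (p - 1) := by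
      calc H (ξ + η) ^ (p - 1) ≤ ((3:ℝ) * H η) ^ (p - 1) :=
            Real.rpow_le_rpow (Hnonneg _) hA (by linarith)
        _ = 3 ^ (p - 1) * H η ^ (p - 1) := hmul3
        _ ≤ 3 * H η ^ (p - 1) := mul_le_mul_of_nonneg_right h3p hrη
    have hb2 : H ξ ^ (p - 1) ≤ 2 * H η ^ (p - 1) := by
      calc H ξ ^ (p - 1) ≤ ((2:ℝ) * H η) ^ (p - 1) :=
            Real.rpow_le_rpow (Hnonneg _) hcase (by linarith)
        _ = 2 ^ (p - 1) * H η ^ (p - 1) := hmul2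
        _ ≤ 2 * H η ^ (p - 1) := mul_le_mul_of_nonneg_right h2p hrη
    calc ‖stress p H (ξ + η) - stress p H ξ‖
        ≤ ‖stress p H (ξ + η)‖ + ‖stress p H ξ‖ := norm_sub_le _ _
      _ ≤ CH * H (ξ + η) ^ (p - 1) + CH * H ξ ^ (p - 1) :=
          add_le_add (hstressb _) (hstressb _)
      _ ≤ (5 * CH + CpH / cH) * H η ^ (p - 1) := by
          nlinarith [mul_le_mul_of_nonneg_left hb1 hCH.le,
            mul_le_mul_of_nonneg_left hb2 hCH.le, mul_nonneg hdiv hrη]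
  · -- here H ξ is large; use the mean value inequality along the segment
    have hseg : ∀ x ∈ segment ℝ ξ (ξ + η), H η < H x := by
      intro x hxs
      obtain ⟨a, b, ha, hb, hab, rfl⟩ := hxs
      have ha' : a = 1 - b := by linarith
      subst ha'
      have hx1 : (1 - b) • ξ + b • (ξ + η) = ξ + b • η := by
        rw [smul_add, sub_smul, one_smul]
        abel
      rw [hx1]
      have hsm : H (b • η) = b * H η := by rw [Hsmul, abs_of_nonneg hb]
      have hge : H ξ ≤ H (ξ + b • η) + b * H η := by
        have h3 : H (-(b • η)) = b * H η := by
          rw [← neg_smul, Hsmul, abs_neg, abs_of_nonneg hb]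
        have := Hadd (ξ + b • η) (-(b • η))
        rw [add_neg_cancel_right, h3] at this
        exact this
      nlinarith
    have hne : ∀ x ∈ segment ℝ ξ (ξ + η), x ≠ 0 := by
      intro x hxs h0
      have := hseg x hxs
      rw [h0, H0] at this
      linarith
    have hξne : ξ ≠ 0 := hne ξ (left_mem_segment ℝ ξ (ξ + η))
    have hξηne : ξ + η ≠ 0 := hne (ξ + η) (right_mem_segment ℝ ξ (ξ + η))
    have hbound : ∀ x ∈ segment ℝ ξ (ξ + η),
        ‖fderiv ℝ (fun y => fderiv ℝ (fun η => H η ^ p) y) x‖ ≤ CpH * H η ^ (p - 2) := by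
      intro x hxs
      refine le_trans (hgd2 x (hne x hxs)) ?_
      have : H x ^ (p - 2) ≤ H η ^ (p - 2) :=
        Real.rpow_le_rpow_of_nonpos hηpos (hseg x hxs).le (by linarith)
      exact mul_le_mul_of_nonneg_left this hCpH
    have hmv := Convex.norm_image_sub_le_of_norm_fderiv_le
      (fun x hx => hgdiff x (hne x hx)) hbound (convex_segment ξ (ξ + η))
      (left_mem_segment ℝ ξ (ξ + η)) (right_mem_segment ℝ ξ (ξ + η))
    rw [add_sub_cancel_left] at hmv
    have hgsub : ‖gradient (fun η => H η ^ p) (ξ + η) - gradient (fun η => H η ^ p) ξ‖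
        = ‖fderiv ℝ (fun η => H η ^ p) (ξ + η) - fderiv ℝ (fun η => H η ^ p) ξ‖ := by
      unfold gradient
      rw [← map_sub]
      exact (InnerProductSpace.toDual ℝ _).symm.norm_map _
    have hnorm : ‖η‖ ≤ H η / cH := by
      rw [le_div_iff₀ hcH]
      have := (hequiv η).1
      linarith
    have hrpow : H η ^ (p - 2) * H η = H η ^ (p - 1) := by
      rw [← Real.rpow_add_one hηpos.ne' (p - 2)]
      congr 1
      ring
    simp only [stress, if_neg hξne, if_neg hξηne]
    rw [← smul_sub, norm_smul, Real.norm_eq_abs, abs_of_pos (by positivity : (0:ℝ) < 1 / p),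
      hgsub]
    have hstep : ‖fderiv ℝ (fun η => H η ^ p) (ξ + η) - fderiv ℝ (fun η => H η ^ p) ξ‖
        ≤ CpH / cH * H η ^ (p - 1) := by
      calc ‖fderiv ℝ (fun η => H η ^ p) (ξ + η) - fderiv ℝ (fun η => H η ^ p) ξ‖
          ≤ CpH * H η ^ (p - 2) * ‖η‖ := hmv
        _ ≤ CpH * H η ^ (p - 2) * (H η / cH) := by
            have h0 : 0 ≤ CpH * H η ^ (p - 2) :=
              mul_nonneg hCpH (Real.rpow_nonneg (Hnonneg η) _)
            exact mul_le_mul_of_nonneg_left hnorm h0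
        _ = CpH / cH * H η ^ (p - 1) := by
            rw [← hrpow]; field_simp
    have h1p : 1 / p ≤ 1 := by
      rw [div_le_one hp0]; linarith
    calc 1 / p * ‖fderiv ℝ (fun η => H η ^ p) (ξ + η) - fderiv ℝ (fun η => H η ^ p) ξ‖
        ≤ 1 * (CpH / cH * H η ^ (p - 1)) := by
          apply mul_le_mul h1p hstep (norm_nonneg _) (by norm_num)
      _ = CpH / cH * H η ^ (p - 1) := one_mul _
      _ ≤ (5 * CH + CpH / cH) * H η ^ (p - 1) := by nlinarith [mul_nonneg hCH.le hrη]
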